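/- Let p be a prime and u, v : ℤ_p → ℤ_p be 1-Lipschitz (compatible) functions with u(z) ≡ 1 (mod p) for all z ∈ ℤ_p. Then the function f(z) = u(z)^{v(z)} (defined via the p-adic exponential on 1 + pℤ_p) is well-defined, takes values in ℤ_p, and is 1-Lipschitz (compatible). -/

import Mathlib

open Filter Topology Finset

/-- A function on the `p`-adic integers is *compatible* if it is 1-Lipschitz. -/
def IsCompatible {p : ℕ} [Fact p.Prime] (f : ℤ_[p] → ℤ_[p]) : Prop :=
  ∀ x y : ℤ_[p], ‖f x - f y‖ ≤ ‖x - y‖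

namespace Stmt16Aux

variable {p : ℕ} [Fact p.Prime]

lemma dvd_iff_norm_le (x : ℤ_[p]) (n : ℕ) :
    (p : ℤ_[p]) ^ n ∣ x ↔ ‖x‖ ≤ (p : ℝ) ^ (-n : ℤ) := by
  rw [← Ideal.mem_span_singleton, ← PadicInt.norm_le_pow_iff_mem_span_pow]

/-- `a ≡ 1 mod p` implies `p ∣ a^m - 1`. -/
lemma dvd_pow_sub_one {a : ℤ_[p]} (h : (p : ℤ_[p]) ∣ a - 1) (m : ℕ) :
    (p : ℤ_[p]) ∣ a ^ m - 1 := by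
  have := sub_dvd_pow_sub_pow a 1 m
  rw [one_pow] at this
  exact h.trans this

lemma key1 {a : ℤ_[p]} (h : (p : ℤ_[p]) ∣ a - 1) (n : ℕ) :
    (p : ℤ_[p]) ^ n ∣ a ^ (p ^ n) - 1 := by
  induction n with
  | zero => simp
  | succ n ih =>
    set b := a ^ (p ^ n) with hb
    have hbp : (p : ℤ_[p]) ∣ b - 1 := dvd_pow_sub_one h _
    have hsum : (p : ℤ_[p]) ∣ (∑ i ∈ range p, b ^ i) := by
      have : (∑ i ∈ range p, b ^ i) = (∑ i ∈ range p, (b ^ i - 1)) + p := by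
        rw [Finset.sum_sub_distrib]
        simp
      rw [this]
      exact dvd_add (Finset.dvd_sum fun i _ => dvd_pow_sub_one hbp i) dvd_rfl
    have : a ^ (p ^ (n + 1)) - 1 = (∑ i ∈ range p, b ^ i) * (b - 1) := by
      rw [geom_sum_mul, hb, ← pow_mul, pow_succ, mul_comm (p ^ n) p, mul_comm p (p^n)]
    rw [this, pow_succ, mul_comm ((p:ℤ_[p]) ^ n) p]
    exact mul_dvd_mul hsum ih

lemma key2 {a : ℤ_[p]} (h : (p : ℤ_[p]) ∣ a - 1) (n t : ℕ) :
    (p : ℤ_[p]) ^ n ∣ a ^ (p ^ n * t) - 1 := by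
  have h1 := key1 h n
  have h2 := sub_dvd_pow_sub_pow (a ^ (p ^ n)) 1 t
  rw [one_pow, ← pow_mul] at h2
  exact h1.trans h2

/-- If `a ≡ 1 mod p` and `k ≤ m` with `p^n ∣ m - k` in `ℕ`, then `p^n ∣ a^m - a^k`. -/
lemma key3 {a : ℤ_[p]} (h : (p : ℤ_[p]) ∣ a - 1) {n m k : ℕ} (hkm : k ≤ m)
    (hd : p ^ n ∣ m - k) : (p : ℤ_[p]) ^ n ∣ a ^ m - a ^ k := by
  obtain ⟨t, ht⟩ := hd
  have hm : m = k + p ^ n * t := by omega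
  have : a ^ m - a ^ k = a ^ k * (a ^ (p ^ n * t) - 1) := by
    rw [hm, pow_add]; ring
  rw [this]
  exact Dvd.dvd.mul_left (key2 h n t) _

/-- Exponent congruence in `ℤ_[p]`-form. -/
lemma key4 {a : ℤ_[p]} (h : (p : ℤ_[p]) ∣ a - 1) {n : ℕ} {m k : ℕ}
    (hd : (p : ℤ_[p]) ^ n ∣ ((m : ℤ_[p]) - (k : ℤ_[p]))) :
    (p : ℤ_[p]) ^ n ∣ a ^ m - a ^ k := by
  have hz : (p : ℤ_[p]) ^ n ∣ (((m : ℤ) - (k : ℤ) : ℤ) : ℤ_[p]) := by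
    push_cast
    exact_mod_cast hd
  rw [PadicInt.pow_p_dvd_int_iff] at hz
  rcases le_total k m with hkm | hmk
  · have : (p ^ n : ℕ) ∣ m - k := by
      have : (p ^ n : ℤ) ∣ ((m - k : ℕ) : ℤ) := by
        rwa [Int.natCast_sub hkm]
      exact_mod_cast this
    exact key3 h hkm this
  · have : (p ^ n : ℕ) ∣ k - m := by
      have : (p ^ n : ℤ) ∣ ((k - m : ℕ) : ℤ) := by
        rw [Int.natCast_sub hmk, ← neg_sub (m : ℤ) (k : ℤ)]
        exact dvd_neg.mpr hz
      exact_mod_cast this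
    have := key3 h hmk this
    rw [← neg_sub]
    exact dvd_neg.mpr this

lemma appr_dvd (z : ℤ_[p]) (n : ℕ) :
    (p : ℤ_[p]) ^ n ∣ z - (PadicInt.appr z n : ℤ_[p]) := by
  have := PadicInt.appr_spec n z
  rwa [Ideal.mem_span_singleton] at this

end Stmt16Aux

open Stmt16Aux in
theorem stmt16 {p : ℕ} [Fact p.Prime] (u v : ℤ_[p] → ℤ_[p])
    (hu : IsCompatible u) (hv : IsCompatible v)
    (hu1 : ∀ z : ℤ_[p], (p : ℤ_[p]) ∣ (u z - 1)) :
    ∃ f : ℤ_[p] → ℤ_[p],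
      (∀ (z : ℤ_[p]) (n : ℕ), (p : ℤ_[p]) ^ n ∣ f z - (u z) ^ (PadicInt.appr (v z) n)) ∧
      IsCompatible f := by
  have hp1 : (1 : ℝ) < p := by exact_mod_cast (Fact.out : p.Prime).one_lt
  set a : ℤ_[p] → ℕ → ℤ_[p] := fun z n => (u z) ^ (PadicInt.appr (v z) n) with ha
  -- successive approximants are congruent
  have hD : ∀ (z : ℤ_[p]) (n m : ℕ), n ≤ m → (p : ℤ_[p]) ^ n ∣ a z m - a z n := by
    intro z n m hnm
    apply key4 (hu1 z)
    have h1 : (p : ℤ_[p]) ^ n ∣ v z - (PadicInt.appr (v z) m : ℤ_[p]) :=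
      (pow_dvd_pow _ hnm).trans (appr_dvd (v z) m)
    have h2 : (p : ℤ_[p]) ^ n ∣ v z - (PadicInt.appr (v z) n : ℤ_[p]) := appr_dvd (v z) n
    have := dvd_sub h2 h1
    simpa using this
  -- the sequence is Cauchy
  have hC : ∀ z : ℤ_[p], CauchySeq (a z) := by
    intro z
    rw [Metric.cauchySeq_iff']
    intro ε hε
    obtain ⟨N, hN⟩ := exists_pow_lt_of_lt_one hε
      (by rw [inv_lt_one₀ (by linarith : (0:ℝ) < p)]; exact hp1 : (p : ℝ)⁻¹ < 1)
    refine ⟨N, fun n hn => ?_⟩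
    rw [dist_eq_norm]
    calc ‖a z n - a z N‖ ≤ (p : ℝ) ^ (-N : ℤ) := by
          rw [← dvd_iff_norm_le]; exact hD z N n hn
      _ = ((p : ℝ)⁻¹) ^ N := by rw [zpow_neg, zpow_natCast, inv_pow]
      _ < ε := hN
  set f : ℤ_[p] → ℤ_[p] := fun z => limUnder atTop (a z) with hf
  have htend : ∀ z, Tendsto (a z) atTop (𝓝 (f z)) := fun z => (hC z).tendsto_limUnder
  -- main approximation property
  have hmain : ∀ (z : ℤ_[p]) (n : ℕ), (p : ℤ_[p]) ^ n ∣ f z - a z n := by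
    intro z n
    have hclosed : IsClosed {w : ℤ_[p] | (p : ℤ_[p]) ^ n ∣ w - a z n} := by
      have : {w : ℤ_[p] | (p : ℤ_[p]) ^ n ∣ w - a z n}
          = {w : ℤ_[p] | ‖w - a z n‖ ≤ (p : ℝ) ^ (-n : ℤ)} := by
        ext w; exact dvd_iff_norm_le _ n
      rw [this]
      exact isClosed_le (by fun_prop) continuous_const
    refine hclosed.mem_of_tendsto (htend z) ?_
    filter_upwards [eventually_ge_atTop n] with m hm
    exact hD z n m hm
  refine ⟨f, hmain, ?_⟩
  -- compatibility
  intro x y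
  by_cases hxy : x = y
  · simp [hxy]
  have hdvd : ∀ n : ℕ, (p : ℤ_[p]) ^ n ∣ x - y → (p : ℤ_[p]) ^ n ∣ f x - f y := by
    intro n hn
    have hun : (p : ℤ_[p]) ^ n ∣ u x - u y := by
      rw [dvd_iff_norm_le]
      exact (hu x y).trans ((dvd_iff_norm_le _ n).mp hn)
    have hvn : (p : ℤ_[p]) ^ n ∣ v x - v y := by
      rw [dvd_iff_norm_le]
      exact (hv x y).trans ((dvd_iff_norm_le _ n).mp hn)
    have hxan : (p : ℤ_[p]) ^ n ∣ a x n - a y n := by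
      have t1 : (p : ℤ_[p]) ^ n ∣ (u x) ^ (PadicInt.appr (v x) n)
          - (u y) ^ (PadicInt.appr (v x) n) :=
        hun.trans (sub_dvd_pow_sub_pow (u x) (u y) _)
      have t2 : (p : ℤ_[p]) ^ n ∣ (u y) ^ (PadicInt.appr (v x) n)
          - (u y) ^ (PadicInt.appr (v y) n) := by
        apply key4 (hu1 y)
        have h1 : (p : ℤ_[p]) ^ n ∣ v x - (PadicInt.appr (v x) n : ℤ_[p]) := appr_dvd _ n
        have h2 : (p : ℤ_[p]) ^ n ∣ v y - (PadicInt.appr (v y) n : ℤ_[p]) := appr_dvd _ n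
        have h3 := dvd_sub h2 (dvd_sub h1 hvn)
        have heq : (v y - (PadicInt.appr (v y) n : ℤ_[p]))
            - ((v x - (PadicInt.appr (v x) n : ℤ_[p])) - (v x - v y))
            = (PadicInt.appr (v x) n : ℤ_[p]) - (PadicInt.appr (v y) n : ℤ_[p]) := by ring
        rwa [heq] at h3
      have := dvd_add t1 t2
      simpa [ha] using this
    have e1 := hmain x n
    have e2 := hmain y n
    have := dvd_add (dvd_sub e1 e2) hxan
    have heq : (f x - a x n - (f y - a y n)) + (a x n - a y n) = f x - f y := by ring
    rwa [heq] at this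
  -- conclude from divisibility
  have hx0 : x - y ≠ 0 := sub_ne_zero.mpr hxy
  set n : ℕ := (x - y).valuation with hn
  have hval : ‖x - y‖ = (p : ℝ) ^ (-n : ℤ) := by
    rw [PadicInt.norm_eq_zpow_neg_valuation hx0]
  have hdx : (p : ℤ_[p]) ^ n ∣ x - y := by
    rw [dvd_iff_norm_le, ← hval]
  rw [hval, ← dvd_iff_norm_le]
  exact hdvd n hdx
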